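/- The equation (1 − x)³ = x has a unique positive real solution β̄, this solution lies in the open interval (0,1), and β̄ is the unique maximizer of the function β ↦ H(β)/(1 + 2β) on the interval [0,1]. -/

import Mathlib

/-- A single tandem duplication of length `k`: `u ++ v ++ w ↦ u ++ v ++ v ++ w` with `|v| = k`. -/
def DupStepLen (q k : ℕ) (x y : List (Fin q)) : Prop :=
  ∃ u v w : List (Fin q), v.length = k ∧ x = u ++ v ++ w ∧ y = u ++ v ++ v ++ w

/-- `DescL q ks x y`: `y` is obtained from `x` by successive tandem duplications whose
lengths are given by the list `ks`. -/
def DescL (q : ℕ) : List ℕ → List (Fin q) → List (Fin q) → Prop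
  | [], x, y => y = x
  | k :: ks, x, y => ∃ z, DupStepLen q k x z ∧ DescL q ks z y

/-- `y ∈ D^t(x)`: `y` is obtained from `x` by `t` tandem duplications, each of length ≤ 3. -/
def DescT (q t : ℕ) (x y : List (Fin q)) : Prop :=
  ∃ ks : List ℕ, ks.length = t ∧ (∀ k ∈ ks, 1 ≤ k ∧ k ≤ 3) ∧ DescL q ks x y

/-- `y` is obtained from `x` by `t` tandem duplications of length ≤ 3, exactly `b` of which
have length 3. -/
def DescTB (q t b : ℕ) (x y : List (Fin q)) : Prop :=
  ∃ ks : List ℕ, ks.length = t ∧ (∀ k ∈ ks, 1 ≤ k ∧ k ≤ 3) ∧ ks.count 3 = b ∧ DescL q ks x y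

/-- `y ∈ D*(x)`: `y` is a descendant of `x` under tandem duplications of length ≤ 3. -/
def Desc (q : ℕ) (x y : List (Fin q)) : Prop := ∃ t, DescT q t x y

/-- Two strings are confusable iff they have a common descendant. -/
def Confusable (q : ℕ) (x y : List (Fin q)) : Prop := ∃ z, Desc q x z ∧ Desc q y z

/-- A zero-error code: a set of pairwise non-confusable strings. -/
def ZeroErrorCode (q : ℕ) (C : Set (List (Fin q))) : Prop :=
  ∀ x ∈ C, ∀ y ∈ C, x ≠ y → ¬ Confusable q x y

/-- A string is irreducible if it contains no substring `a·a`, `a·b·a·b`, or `a·b·c·a·b·c`. -/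
def IrreducibleStr (q : ℕ) (x : List (Fin q)) : Prop :=
  (∀ a : Fin q, ¬ [a, a] <:+: x) ∧
  (∀ a b : Fin q, ¬ [a, b, a, b] <:+: x) ∧
  (∀ a b c : Fin q, ¬ [a, b, c, a, b, c] <:+: x)

/-- `I_q(n)`: the number of irreducible strings of length `n` over the alphabet `A_q`. -/
noncomputable def IrrCount (q n : ℕ) : ℕ :=
  Set.ncard {x : List (Fin q) | x.length = n ∧ IrreducibleStr q x}

/-- The binary entropy function in base 2 (with `H(0) = H(1) = 0`, since `logb 2 0 = 0`). -/
noncomputable def binH (β : ℝ) : ℝ :=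
  -β * Real.logb 2 β - (1 - β) * Real.logb 2 (1 - β)

/-- KL-divergence style strict inequality (Gibbs). -/
lemma kl_pos (p β : ℝ) (hp0 : 0 < p) (hp1 : p < 1) (hβ0 : 0 ≤ β) (hβ1 : β ≤ 1)
    (hne : β ≠ p) :
    β * Real.log p + (1 - β) * Real.log (1 - p) <
      β * Real.log β + (1 - β) * Real.log (1 - β) := by
  rcases eq_or_lt_of_le hβ0 with h0 | h0
  · simp only [← h0]
    simpa using Real.log_neg (by linarith) (by linarith)
  rcases eq_or_lt_of_le hβ1 with h1 | h1
  · simp only [h1]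
    simpa using Real.log_neg hp0 hp1
  have hβ1' : 0 < 1 - β := by linarith
  have e1 : Real.log p = Real.log (p / β) + Real.log β := by
    rw [Real.log_div hp0.ne' h0.ne']; ring
  have e2 : Real.log (1 - p) = Real.log ((1 - p) / (1 - β)) + Real.log (1 - β) := by
    rw [Real.log_div (by linarith) hβ1'.ne']; ring
  have k1 : Real.log (p / β) < p / β - 1 := by
    apply Real.log_lt_sub_one_of_pos (by positivity)
    intro h
    apply hne
    field_simp at h
    linarith
  have hp1' : 0 < 1 - p := by linarith
  have k2 : Real.log ((1 - p) / (1 - β)) ≤ (1 - p) / (1 - β) - 1 :=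
    Real.log_le_sub_one_of_pos (by positivity)
  have m1 : β * Real.log (p / β) < p - β := by
    have := mul_lt_mul_of_pos_left k1 h0
    have e : β * (p / β - 1) = p - β := by field_simp
    linarith [this, e]
  have m2 : (1 - β) * Real.log ((1 - p) / (1 - β)) ≤ β - p := by
    have := mul_le_mul_of_nonneg_left k2 hβ1'.le
    have e : (1 - β) * ((1 - p) / (1 - β) - 1) = β - p := by field_simp; ring
    linarith [this, e]
  rw [e1, e2]
  nlinarith

/-- the equation `(1 - x)³ = x` has a unique positive real solution `β̄`;
this solution lies in `(0,1)`; and `β̄` is the unique maximizer of `β ↦ H(β)/(1 + 2β)`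
on `[0,1]`. -/
theorem unique_root_and_unique_maximizer :
    (∃! x : ℝ, 0 < x ∧ (1 - x) ^ 3 = x) ∧
    ∀ βbar : ℝ, 0 < βbar → (1 - βbar) ^ 3 = βbar →
      βbar ∈ Set.Ioo (0 : ℝ) 1 ∧
      (∀ β ∈ Set.Icc (0 : ℝ) 1, binH β / (1 + 2 * β) ≤ binH βbar / (1 + 2 * βbar)) ∧
      (∀ β ∈ Set.Icc (0 : ℝ) 1,
        binH β / (1 + 2 * β) = binH βbar / (1 + 2 * βbar) → β = βbar) := by
  have hcube : StrictMono fun a : ℝ => a ^ 3 := Odd.strictMono_pow (by decide)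
  constructor
  · -- existence and uniqueness of the root
    have hcont : ContinuousOn (fun x : ℝ => (1 - x) ^ 3 - x) (Set.Icc 0 1) := by
      fun_prop
    have hmem : (0 : ℝ) ∈ Set.Icc ((fun x : ℝ => (1 - x) ^ 3 - x) 1)
        ((fun x : ℝ => (1 - x) ^ 3 - x) 0) := by norm_num
    obtain ⟨c, hc, hfc⟩ := intermediate_value_Icc' (by norm_num : (0:ℝ) ≤ 1) hcont hmem
    simp only at hfc
    have hc0 : 0 < c := by
      rcases eq_or_lt_of_le hc.1 with h | h
      · exfalso; rw [← h] at hfc; norm_num at hfc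
      · exact h
    refine ⟨c, ⟨hc0, by linarith⟩, ?_⟩
    rintro y ⟨hy0, hy⟩
    by_contra hne
    rcases lt_or_gt_of_ne hne with h | h
    · have := hcube (show 1 - c < 1 - y by linarith)
      simp only at this
      rw [hy] at this; nlinarith
    · have := hcube (show 1 - y < 1 - c by linarith)
      simp only at this
      rw [hy] at this; nlinarith
  · intro p hp0 hroot
    have hp1 : p < 1 := by nlinarith [sq_nonneg (1 - p), sq_nonneg p]
    have hr0 : 0 < 1 - p := by linarith
    have log2pos : 0 < Real.log 2 := Real.log_pos one_lt_two
    have hlogp : Real.log p = 3 * Real.log (1 - p) := by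
      conv_lhs => rw [← hroot]
      rw [Real.log_pow]; norm_num
    set M : ℝ := -Real.log (1 - p) / Real.log 2 with hM
    have hbinH : ∀ β : ℝ, binH β =
        (-(β * Real.log β) - (1 - β) * Real.log (1 - β)) / Real.log 2 := by
      intro β; unfold binH Real.logb; field_simp
    have hfp : binH p / (1 + 2 * p) = M := by
      rw [hbinH p, hlogp, hM]
      field_simp
      ring
    have main : ∀ β ∈ Set.Icc (0:ℝ) 1, β ≠ p → binH β / (1 + 2 * β) < M := by
      intro β hβ hne
      have h2β : 0 < 1 + 2 * β := by linarith [hβ.1]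
      rw [div_lt_iff₀ h2β]
      have key := kl_pos p β hp0 hp1 hβ.1 hβ.2 hne
      have hRHS : M * (1 + 2 * β) =
          (-(β * Real.log p) - (1 - β) * Real.log (1 - p)) / Real.log 2 := by
        rw [hM, hlogp]; field_simp; ring
      rw [hbinH β, hRHS, div_lt_div_iff₀ log2pos log2pos]
      nlinarith
    refine ⟨⟨hp0, hp1⟩, ?_, ?_⟩
    · intro β hβ
      by_cases hne : β = p
      · rw [hne]
      · rw [hfp]; exact (main β hβ hne).le
    · intro β hβ heq
      by_contra hne
      have := main β hβ hne
      rw [hfp] at heq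
      linarith [heq ▸ this]
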